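/- If S is a general d-position set of a connected graph G with d ≥ 2, then the subgraph of G induced by S is a disjoint union of complete graphs. -/
import Mathlib


/-- `S` is a general `d`-position set of `G`: no three distinct vertices of `S`
lie on a common geodesic of length at most `d`. -/
def IsGenDPos {V : Type*} (G : SimpleGraph V) (d : ℕ) (S : Set V) : Prop :=
  ∀ ⦃u v w : V⦄, u ∈ S → v ∈ S → w ∈ S → u ≠ v → u ≠ w → v ≠ w →
    G.dist u v + G.dist v w = G.dist u w → G.dist u w ≤ d → False

/-- The general `d`-position number of `G`. -/
noncomputable def gpNum {V : Type*} (G : SimpleGraph V) (d : ℕ) : ℕ :=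
  sSup {n | ∃ S : Set V, IsGenDPos G d S ∧ S.ncard = n}

/-- Transitivity of adjacency within a general d-position set. -/
lemma adj_trans_of_genDPos {V : Type*} (G : SimpleGraph V) (hG : G.Connected) (d : ℕ)
    (hd : 2 ≤ d) (S : Set V) (hS : IsGenDPos G d S) {u b v : V}
    (hu : u ∈ S) (hb : b ∈ S) (hv : v ∈ S)
    (h1 : G.Adj u b) (h2 : G.Adj b v) (huv : u ≠ v) : G.Adj u v := by
  by_contra hadj
  have hdub : G.dist u b = 1 := SimpleGraph.dist_eq_one_iff_adj.mpr h1
  have hdbv : G.dist b v = 1 := SimpleGraph.dist_eq_one_iff_adj.mpr h2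
  have hle : G.dist u v ≤ 2 := by
    calc G.dist u v ≤ G.dist u b + G.dist b v := hG.dist_triangle
    _ = 2 := by omega
  have hne0 : G.dist u v ≠ 0 := by
    intro h; exact huv (hG.dist_eq_zero_iff.mp h)
  have hne1 : G.dist u v ≠ 1 := fun h => hadj (SimpleGraph.dist_eq_one_iff_adj.mp h)
  have h2' : G.dist u v = 2 := by omega
  exact hS hu hb hv h1.ne huv h2.ne (by omega) (by omega)

/-- If S is a general d-position set of a connected graph G with d ≥ 2, then the
subgraph of G induced by S is a disjoint union of complete graphs (i.e. every two
vertices in the same component of the induced subgraph are equal or adjacent). -/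
theorem stmt_0 {V : Type*} (G : SimpleGraph V) (hG : G.Connected) (d : ℕ) (hd : 2 ≤ d)
    (S : Set V) (hS : IsGenDPos G d S) :
    ∀ u v : S, (G.induce S).Reachable u v → u = v ∨ G.Adj u.val v.val := by
  intro u v ⟨p⟩
  induction p with
  | nil => exact Or.inl rfl
  | cons h p ih =>
    rename_i a b c
    rcases ih with h' | h'
    · subst h'
      exact Or.inr h
    · by_cases hac : a = c
      · exact Or.inl hac
      · refine Or.inr (adj_trans_of_genDPos G hG d hd S hS a.2 b.2 c.2 h h' ?_)
        exact fun he => hac (Subtype.ext he)
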